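/- Let 0<2α<β≤1 and h∈Höl_β(X,d). Then the kernel K_{α,h}(x,y):=(h(x)−h(y))/d(x,y)^{d_f+2α} defines a bounded linear operator K_{α,h} on L²(X,μ) by K_{α,h}f(x)=∫_X K_{α,h}(x,y)f(y)dμ(y), and its operator norm satisfies ‖K_{α,h}‖ ≤ C·Höl_β(h) for a constant C independent of h. -/

import Mathlib

open MeasureTheory Metric ENNReal NNReal

noncomputable section



private lemma schur_aux
    {X : Type*} [MeasurableSpace X] (μ : Measure X) [SFinite μ]
    (K : X → X → ℝ) (hK : Measurable (Function.uncurry K))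
    (hsymm : ∀ x y : X, (‖K x y‖₊ : ℝ≥0∞) = (‖K y x‖₊ : ℝ≥0∞))
    (M : ℝ≥0∞) (hM : M ≠ ⊤)
    (hbound : ∀ x : X, ∫⁻ y, (‖K x y‖₊ : ℝ≥0∞) ∂μ ≤ M)
    (f : X → ℝ) (hf : Measurable f) :
    ∫⁻ x, (‖∫ y, K x y * f y ∂μ‖₊ : ℝ≥0∞) ^ (2:ℝ) ∂μ ≤
      M ^ (2:ℝ) * ∫⁻ y, (‖f y‖₊ : ℝ≥0∞) ^ (2:ℝ) ∂μ := by
  set Kn : X → X → ℝ≥0∞ := fun x y => (‖K x y‖₊ : ℝ≥0∞) with hKndef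
  set g : X → ℝ≥0∞ := fun y => (‖f y‖₊ : ℝ≥0∞) with hgdef
  have hKn : Measurable fun p : X × X => Kn p.1 p.2 := hK.nnnorm.coe_nnreal_ennreal
  have hKnx : ∀ x, Measurable fun y => Kn x y := fun x =>
    hKn.comp (measurable_prodMk_left)
  have hKny : ∀ y, Measurable fun x => Kn x y := fun y =>
    hKn.comp (measurable_prodMk_right)
  have hg : Measurable g := hf.nnnorm.coe_nnreal_ennreal
  have h22 : (2:ℝ).HolderConjugate 2 := Real.HolderConjugate.two_two
  -- pointwise Cauchy-Schwarz
  have key : ∀ x, (‖∫ y, K x y * f y ∂μ‖₊ : ℝ≥0∞) ^ (2:ℝ) ≤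
      M * ∫⁻ y, Kn x y * g y ^ (2:ℝ) ∂μ := by
    intro x
    have step1 : (‖∫ y, K x y * f y ∂μ‖₊ : ℝ≥0∞) ≤ ∫⁻ y, Kn x y * g y ∂μ := by
      refine le_trans (enorm_integral_le_lintegral_enorm _) (le_of_eq ?_)
      simp [hKndef, hgdef, nnnorm_mul, ENNReal.coe_mul, enorm_eq_nnnorm]
    have cs := ENNReal.lintegral_mul_le_Lp_mul_Lq μ h22
      (f := fun y => (Kn x y) ^ (1/2:ℝ)) (g := fun y => (Kn x y) ^ (1/2:ℝ) * g y)
      ((hKnx x).pow_const _).aemeasurable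
      (((hKnx x).pow_const _).mul hg).aemeasurable
    have e1 : ∀ y, ((Kn x y) ^ (1/2:ℝ)) * ((Kn x y) ^ (1/2:ℝ) * g y) = Kn x y * g y := by
      intro y
      rw [← mul_assoc, ← ENNReal.rpow_add_of_nonneg _ _ (by norm_num) (by norm_num)]
      norm_num
    have e2 : ∀ y, ((Kn x y) ^ (1/2:ℝ)) ^ (2:ℝ) = Kn x y := by
      intro y; rw [← ENNReal.rpow_mul]; norm_num
    have e3 : ∀ y, ((Kn x y) ^ (1/2:ℝ) * g y) ^ (2:ℝ) = Kn x y * g y ^ (2:ℝ) := by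
      intro y; rw [ENNReal.mul_rpow_of_nonneg _ _ (by norm_num), e2]
    simp only [Pi.mul_apply, e1, e2, e3] at cs
    have cs2 : (∫⁻ y, Kn x y * g y ∂μ) ^ (2:ℝ) ≤
        (∫⁻ y, Kn x y ∂μ) * ∫⁻ y, Kn x y * g y ^ (2:ℝ) ∂μ := by
      calc (∫⁻ y, Kn x y * g y ∂μ) ^ (2:ℝ)
          ≤ ((∫⁻ y, Kn x y ∂μ) ^ (1/2:ℝ) * (∫⁻ y, Kn x y * g y ^ (2:ℝ) ∂μ) ^ (1/2:ℝ)) ^ (2:ℝ) :=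
            ENNReal.rpow_le_rpow cs (by norm_num)
        _ = _ := by
            rw [ENNReal.mul_rpow_of_nonneg _ _ (by norm_num), ← ENNReal.rpow_mul,
              ← ENNReal.rpow_mul]
            norm_num
    calc (‖∫ y, K x y * f y ∂μ‖₊ : ℝ≥0∞) ^ (2:ℝ)
        ≤ (∫⁻ y, Kn x y * g y ∂μ) ^ (2:ℝ) := ENNReal.rpow_le_rpow step1 (by norm_num)
      _ ≤ (∫⁻ y, Kn x y ∂μ) * ∫⁻ y, Kn x y * g y ^ (2:ℝ) ∂μ := cs2
      _ ≤ M * ∫⁻ y, Kn x y * g y ^ (2:ℝ) ∂μ := mul_le_mul_left (hbound x) _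
  calc ∫⁻ x, (‖∫ y, K x y * f y ∂μ‖₊ : ℝ≥0∞) ^ (2:ℝ) ∂μ
      ≤ ∫⁻ x, M * ∫⁻ y, Kn x y * g y ^ (2:ℝ) ∂μ ∂μ := lintegral_mono key
    _ = M * ∫⁻ x, ∫⁻ y, Kn x y * g y ^ (2:ℝ) ∂μ ∂μ := lintegral_const_mul' _ _ hM
    _ = M * ∫⁻ y, ∫⁻ x, Kn x y * g y ^ (2:ℝ) ∂μ ∂μ := by
        rw [lintegral_lintegral_swap]
        exact (hKn.mul ((hg.comp measurable_snd).pow_const _)).aemeasurable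
    _ = M * ∫⁻ y, (∫⁻ x, Kn x y ∂μ) * g y ^ (2:ℝ) ∂μ := by
        congr 1
        refine lintegral_congr fun y => ?_
        exact lintegral_mul_const _ (hKny y)
    _ ≤ M * ∫⁻ y, M * g y ^ (2:ℝ) ∂μ := by
        refine mul_le_mul_right (lintegral_mono fun y => ?_) _
        refine mul_le_mul_left ?_ _
        calc ∫⁻ x, Kn x y ∂μ = ∫⁻ x, Kn y x ∂μ := by simp_rw [hKndef, hsymm]
          _ ≤ M := hbound y
    _ = M ^ (2:ℝ) * ∫⁻ y, g y ^ (2:ℝ) ∂μ := by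
        rw [lintegral_const_mul' _ _ hM, ← mul_assoc]
        congr 1
        rw [show ((2:ℝ)) = ((2:ℕ):ℝ) by norm_num, ENNReal.rpow_natCast, sq]



private lemma geom_pow_aux {t c : ℝ} (ht : 0 ≤ t) (k : ℕ) :
    (t / 2 ^ k) ^ c = t ^ c * ((2:ℝ) ^ (-c)) ^ k := by
  have h2k : (0:ℝ) ≤ 2 ^ k := by positivity
  rw [Real.div_rpow ht h2k]
  have : ((2:ℝ) ^ k) ^ c = ((2:ℝ) ^ c) ^ k := by
    rw [← Real.rpow_natCast (2:ℝ) k, ← Real.rpow_mul (by norm_num), mul_comm,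
      Real.rpow_mul (by norm_num), Real.rpow_natCast]
  rw [this, div_eq_mul_inv, ← inv_pow, ← Real.rpow_neg (by norm_num)]

private lemma kernel_bound
    {X : Type*} [MetricSpace X] [CompactSpace X] [MeasurableSpace X] [BorelSpace X]
    (μ : Measure X) [IsFiniteMeasure μ]
    (df : ℝ) (hdf : 0 < df) (CA : ℝ) (hCA : 1 ≤ CA)
    (hAhlfors : ∀ (x : X) (r : ℝ), 0 ≤ r → r < Metric.diam (Set.univ : Set X) →
      CA⁻¹ * r ^ df ≤ (μ (Metric.closedBall x r)).toReal ∧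
        (μ (Metric.closedBall x r)).toReal ≤ CA * r ^ df)
    (α β : ℝ) (hα0 : 0 < α) (hαβ : 2 * α < β) (hβ : β ≤ 1) :
    ∃ M : ℝ≥0∞, M ≠ ⊤ ∧ ∀ (h : X → ℝ) (H : ℝ≥0), HolderWith H β.toNNReal h →
      ∀ x : X, ∫⁻ y, (‖(h x - h y) / dist x y ^ (df + 2*α)‖₊ : ℝ≥0∞) ∂μ ≤ (H : ℝ≥0∞) * M := by
  have hβ0 : 0 < β := lt_trans (by positivity) hαβ
  have hγ : 0 < β - 2 * α := by linarith
  set γ : ℝ := β - 2 * α with hγdef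
  set D : ℝ := Metric.diam (Set.univ : Set X) with hDdef
  have hD0 : 0 ≤ D := Metric.diam_nonneg
  have hβcoe : ((β.toNNReal : ℝ)) = β := Real.coe_toNNReal β hβ0.le
  -- pointwise Hölder bound
  have hnum : ∀ (h : X → ℝ) (H : ℝ≥0), HolderWith H β.toNNReal h →
      ∀ x y : X, |h x - h y| ≤ (H : ℝ) * dist x y ^ β := by
    intro h H hH x y
    have := hH.dist_le x y
    rwa [Real.dist_eq, hβcoe] at this
  rcases eq_or_lt_of_le hD0 with hD | hD
  · -- degenerate case: diameter zero
    refine ⟨1, one_ne_top, fun h H hH x => ?_⟩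
    have hzero : ∀ y : X, h x - h y = 0 := by
      intro y
      have hd : dist x y = 0 := by
        have h1 : dist x y ≤ D :=
          Metric.dist_le_diam_of_mem (isCompact_univ.isBounded) trivial trivial
        have h2 : 0 ≤ dist x y := dist_nonneg
        linarith [hD.symm ▸ h1]
      have := hnum h H hH x y
      rw [hd, Real.zero_rpow hβ0.ne', mul_zero] at this
      have habs : |h x - h y| = 0 := le_antisymm this (abs_nonneg _)
      exact abs_eq_zero.mp habs
    simp only [hzero, zero_div, nnnorm_zero, ENNReal.coe_zero, lintegral_zero]
    exact zero_le
  · -- main case: D > 0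
    set CB : ℝ := max CA ((μ Set.univ).toReal / D ^ df) with hCBdef
    have hCB0 : 0 < CB := lt_of_lt_of_le (by linarith) (le_max_left _ _)
    set r : ℝ := (2:ℝ) ^ (-γ) with hrdef
    have hr0 : 0 < r := Real.rpow_pos_of_pos (by norm_num) _
    have hr1 : r < 1 := by
      rw [hrdef]
      calc (2:ℝ) ^ (-γ) < 2 ^ (0:ℝ) :=
            Real.rpow_lt_rpow_of_exponent_lt (by norm_num) (by linarith)
        _ = 1 := Real.rpow_zero 2
    set c₀ : ℝ := CB * 2 ^ df * D ^ γ with hc₀def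
    have hc₀0 : 0 < c₀ := by
      have : (0:ℝ) < (2:ℝ) ^ df := Real.rpow_pos_of_pos (by norm_num) _
      have : (0:ℝ) < D ^ γ := Real.rpow_pos_of_pos hD _
      positivity
    refine ⟨ENNReal.ofReal c₀ * (1 - ENNReal.ofReal r)⁻¹, ?_, ?_⟩
    · refine ENNReal.mul_ne_top ENNReal.ofReal_ne_top ?_
      rw [ENNReal.inv_ne_top]
      intro hcon
      rw [tsub_eq_zero_iff_le] at hcon
      exact absurd (lt_of_le_of_lt hcon (by exact_mod_cast ENNReal.ofReal_lt_one.mpr hr1))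
        (lt_irrefl _)
    intro h H hH x
    -- the annuli
    set A : ℕ → Set X := fun k => {y | D / 2 ^ (k+1) < dist x y ∧ dist x y ≤ D / 2 ^ k}
      with hAdef
    set S : ℕ → Set X := fun k => Nat.casesOn k {y | dist x y = 0} A with hSdef
    set F : X → ℝ≥0∞ := fun y => (‖(h x - h y) / dist x y ^ (df + 2*α)‖₊ : ℝ≥0∞) with hFdef
    have cover : (⋃ k, S k) = Set.univ := by
      refine Set.eq_univ_of_forall fun y => ?_
      rcases eq_or_lt_of_le (dist_nonneg (x := x) (y := y)) with hxy | hxy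
      · exact Set.mem_iUnion.mpr ⟨0, hxy.symm⟩
      · have hdD : dist x y ≤ D :=
          Metric.dist_le_diam_of_mem (isCompact_univ.isBounded) trivial trivial
        have hex : ∃ k : ℕ, D / 2 ^ (k+1) < dist x y := by
          obtain ⟨k, hk⟩ := pow_unbounded_of_one_lt (D / dist x y) (one_lt_two (α := ℝ))
          refine ⟨k, ?_⟩
          have h2k : (0:ℝ) < 2 ^ (k+1) := by positivity
          rw [div_lt_iff₀ h2k]
          have hD' : D < 2 ^ k * dist x y := (div_lt_iff₀ hxy).mp hk
          have hpk : (2:ℝ) ^ k ≤ 2 ^ (k+1) := by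
            apply pow_le_pow_right₀ (by norm_num); omega
          nlinarith
        set k := Nat.find hex with hkdef
        have hk1 : D / 2 ^ (k+1) < dist x y := Nat.find_spec hex
        have hk2 : dist x y ≤ D / 2 ^ k := by
          rcases Nat.eq_zero_or_pos k with h0 | hpos
          · rw [h0]; simpa using hdD
          · have hmin := Nat.find_min hex (hkdef ▸ (show k - 1 < k from by omega))
            push_neg at hmin
            have hke : k - 1 + 1 = k := by omega
            rwa [hke] at hmin
        exact Set.mem_iUnion.mpr ⟨k + 1, ⟨hk1, hk2⟩⟩
    -- the zero-measure point
    have hS0 : μ (S 0) = 0 := by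
      have hSx : S 0 = {x} := by
        ext y
        simp only [hSdef, Set.mem_setOf_eq, Set.mem_singleton_iff]
        constructor
        · intro hy; exact (dist_eq_zero.mp hy).symm
        · intro hy; simp [hy]
      rw [hSx]
      have hle : ∀ n : ℕ, (μ {x}).toReal ≤ CA * (D / 2 ^ (n+1)) ^ df := by
        intro n
        have hr0' : 0 < D / 2 ^ (n+1) := by positivity
        have hrD : D / 2 ^ (n+1) < D := by
          apply div_lt_self hD
          exact one_lt_pow₀ (by norm_num) (by omega)
        refine le_trans ?_ (hAhlfors x _ hr0'.le hrD).2
        apply ENNReal.toReal_mono (measure_ne_top μ _)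
        apply measure_mono
        intro y hy
        simp only [Set.mem_singleton_iff] at hy
        subst hy
        exact Metric.mem_closedBall_self hr0'.le
      have htend : Filter.Tendsto (fun n : ℕ => CA * (D / 2 ^ (n+1)) ^ df)
          Filter.atTop (nhds 0) := by
        have h1 : Filter.Tendsto (fun n : ℕ => D / 2 ^ (n+1)) Filter.atTop (nhds 0) := by
          have : (fun n : ℕ => D / 2 ^ (n+1)) = fun n : ℕ => (D / 2) * (1/2 : ℝ) ^ n := by
            funext n; rw [pow_succ, one_div, inv_pow]; ring
          rw [this]
          have := tendsto_pow_atTop_nhds_zero_of_lt_one (by norm_num : (0:ℝ) ≤ 1/2)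
            (by norm_num : (1/2:ℝ) < 1)
          simpa using this.const_mul (D / 2)
        have h2 : Filter.Tendsto (fun t : ℝ => CA * t ^ df) (nhds 0) (nhds 0) := by
          have hcont : ContinuousAt (fun t : ℝ => t ^ df) 0 :=
            Real.continuousAt_rpow_const 0 df (Or.inr hdf.le)
          have : Filter.Tendsto (fun t : ℝ => t ^ df) (nhds 0) (nhds 0) := by
            simpa [Real.zero_rpow hdf.ne'] using hcont.tendsto
          simpa using this.const_mul CA
        exact h2.comp h1
      have hfin : (μ {x}).toReal ≤ 0 := ge_of_tendsto' htend hle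
      have : (μ {x}).toReal = 0 := le_antisymm hfin ENNReal.toReal_nonneg
      exact (ENNReal.toReal_eq_zero_iff _).mp this |>.resolve_right (measure_ne_top μ _)
    -- per-annulus bound
    have hann : ∀ k : ℕ, ∫⁻ y in A k, F y ∂μ ≤ ENNReal.ofReal ((H : ℝ) * (c₀ * r ^ k)) := by
      intro k
      have hAmeas : MeasurableSet (A k) := by
        have hcont : Continuous fun y => dist x y := continuous_const.dist continuous_id
        exact (isOpen_lt continuous_const hcont).measurableSet.inter
          (isClosed_le hcont continuous_const).measurableSet
      have hpt : ∀ y ∈ A k, F y ≤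
          ENNReal.ofReal ((H : ℝ) * ((D / 2 ^ k) ^ γ / (D / 2 ^ (k+1)) ^ df)) := by
        intro y hy
        obtain ⟨hy1, hy2⟩ := hy
        have hd0 : 0 < dist x y := lt_trans (by positivity) hy1
        have hpos1 : (0:ℝ) < (D / 2 ^ (k+1)) ^ df := Real.rpow_pos_of_pos (by positivity) _
        have hddf : (0:ℝ) < dist x y ^ df := Real.rpow_pos_of_pos hd0 _
        have habs : |(h x - h y) / dist x y ^ (df + 2*α)| ≤
            (H : ℝ) * ((D / 2 ^ k) ^ γ / (D / 2 ^ (k+1)) ^ df) := by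
          rw [abs_div, abs_of_nonneg (Real.rpow_nonneg dist_nonneg _)]
          have hsplit : dist x y ^ (df + 2*α) = dist x y ^ df * dist x y ^ (2*α) :=
            Real.rpow_add hd0 _ _
          have hnum' : |h x - h y| ≤ (H : ℝ) * (dist x y ^ γ * dist x y ^ (2*α)) := by
            have := hnum h H hH x y
            rwa [show β = γ + 2*α by rw [hγdef]; ring, Real.rpow_add hd0] at this
          rw [hsplit]
          have hq : |h x - h y| / (dist x y ^ df * dist x y ^ (2*α)) ≤
              (H : ℝ) * dist x y ^ γ / dist x y ^ df := by
            rw [div_le_div_iff₀ (by positivity) hddf]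
            have h2α : (0:ℝ) < dist x y ^ (2*α) := Real.rpow_pos_of_pos hd0 _
            calc |h x - h y| * dist x y ^ df
                ≤ ((H:ℝ) * (dist x y ^ γ * dist x y ^ (2*α))) * dist x y ^ df := by
                  exact mul_le_mul_of_nonneg_right hnum' (Real.rpow_nonneg dist_nonneg _)
              _ = (H:ℝ) * dist x y ^ γ * (dist x y ^ df * dist x y ^ (2*α)) := by ring
          refine le_trans hq ?_
          rw [mul_div_assoc]
          apply mul_le_mul_of_nonneg_left _ (H : ℝ≥0).coe_nonneg
          apply div_le_div₀ (Real.rpow_nonneg (by positivity) _)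
            (Real.rpow_le_rpow dist_nonneg hy2 hγ.le) hpos1
            (Real.rpow_le_rpow (by positivity) hy1.le hdf.le)
        calc F y = ENNReal.ofReal |(h x - h y) / dist x y ^ (df + 2*α)| := by
              rw [hFdef]; exact Real.enorm_eq_ofReal_abs _
          _ ≤ _ := ENNReal.ofReal_le_ofReal habs
      have hμA : μ (A k) ≤ ENNReal.ofReal (CB * (D / 2 ^ k) ^ df) := by
        cases' k with m
        · -- k = 0
          have : μ (A 0) ≤ μ Set.univ := measure_mono (Set.subset_univ _)
          refine le_trans this ?_
          rw [← ENNReal.ofReal_toReal (measure_ne_top μ Set.univ)]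
          apply ENNReal.ofReal_le_ofReal
          have hDdf : (0:ℝ) < D ^ df := Real.rpow_pos_of_pos hD _
          calc (μ Set.univ).toReal = ((μ Set.univ).toReal / D ^ df) * D ^ df := by
                field_simp
            _ ≤ CB * D ^ df := by
                apply mul_le_mul_of_nonneg_right (le_max_right _ _) hDdf.le
            _ = CB * (D / 2 ^ 0) ^ df := by norm_num
        · -- k = m+1
          have hsub : A (m+1) ⊆ Metric.closedBall x (D / 2 ^ (m+1)) := by
            intro y hy
            rw [Metric.mem_closedBall, dist_comm]
            exact hy.2
          have hr0' : (0:ℝ) ≤ D / 2 ^ (m+1) := by positivity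
          have hrD : D / 2 ^ (m+1) < D := div_lt_self hD (one_lt_pow₀ (by norm_num) (by omega))
          have := (hAhlfors x _ hr0' hrD).2
          calc μ (A (m+1)) ≤ μ (Metric.closedBall x (D / 2 ^ (m+1))) := measure_mono hsub
            _ ≤ ENNReal.ofReal (CA * (D / 2 ^ (m+1)) ^ df) := by
                rw [← ENNReal.ofReal_toReal (measure_ne_top μ _)]
                exact ENNReal.ofReal_le_ofReal this
            _ ≤ ENNReal.ofReal (CB * (D / 2 ^ (m+1)) ^ df) := by
                apply ENNReal.ofReal_le_ofReal
                apply mul_le_mul_of_nonneg_right (le_max_left _ _)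
                  (Real.rpow_nonneg (by positivity) _)
      calc ∫⁻ y in A k, F y ∂μ
          ≤ ∫⁻ _ in A k, ENNReal.ofReal ((H : ℝ) * ((D / 2 ^ k) ^ γ / (D / 2 ^ (k+1)) ^ df)) ∂μ :=
            setLIntegral_mono' hAmeas hpt
        _ = ENNReal.ofReal ((H : ℝ) * ((D / 2 ^ k) ^ γ / (D / 2 ^ (k+1)) ^ df)) * μ (A k) :=
            setLIntegral_const _ _
        _ ≤ ENNReal.ofReal ((H : ℝ) * ((D / 2 ^ k) ^ γ / (D / 2 ^ (k+1)) ^ df)) *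
              ENNReal.ofReal (CB * (D / 2 ^ k) ^ df) := mul_le_mul_right hμA _
        _ = ENNReal.ofReal (((H : ℝ) * ((D / 2 ^ k) ^ γ / (D / 2 ^ (k+1)) ^ df)) *
              (CB * (D / 2 ^ k) ^ df)) := by
            rw [← ENNReal.ofReal_mul]
            positivity
        _ = ENNReal.ofReal ((H : ℝ) * (c₀ * r ^ k)) := by
            congr 1
            have hpos1 : (0:ℝ) < (D / 2 ^ (k+1)) ^ df := Real.rpow_pos_of_pos (by positivity) _
            have hsplit : (D / 2 ^ k) ^ df = 2 ^ df * (D / 2 ^ (k+1)) ^ df := by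
              have : D / 2 ^ k = 2 * (D / 2 ^ (k+1)) := by
                rw [pow_succ]; field_simp
              rw [this, Real.mul_rpow (by norm_num) (by positivity)]
            have hgeo : (D / 2 ^ k) ^ γ = D ^ γ * r ^ k := geom_pow_aux hD0 k
            rw [hc₀def]
            rw [hsplit, hgeo]
            field_simp
    -- put it together
    calc ∫⁻ y, F y ∂μ = ∫⁻ y in Set.univ, F y ∂μ := (setLIntegral_univ _).symm
      _ = ∫⁻ y in ⋃ k, S k, F y ∂μ := by rw [cover]
      _ ≤ ∑' k, ∫⁻ y in S k, F y ∂μ := lintegral_iUnion_le _ _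
      _ ≤ ∑' k, (Nat.casesOn k 0 fun m => ENNReal.ofReal ((H : ℝ) * (c₀ * r ^ m)) : ℝ≥0∞) := by
          apply ENNReal.tsum_le_tsum
          intro k
          cases' k with m
          · rw [setLIntegral_measure_zero _ _ hS0]; exact zero_le
          · exact hann m
      _ = ∑' m : ℕ, ENNReal.ofReal ((H : ℝ) * (c₀ * r ^ m)) := by
          rw [tsum_eq_zero_add' ENNReal.summable]
          exact zero_add _
      _ = (H : ℝ≥0∞) * (ENNReal.ofReal c₀ * (1 - ENNReal.ofReal r)⁻¹) := by
          have : ∀ m : ℕ, ENNReal.ofReal ((H : ℝ) * (c₀ * r ^ m)) =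
              ((H : ℝ≥0∞) * ENNReal.ofReal c₀) * ENNReal.ofReal r ^ m := by
            intro m
            rw [ENNReal.ofReal_mul (H : ℝ≥0).coe_nonneg, ENNReal.ofReal_mul hc₀0.le,
              ENNReal.ofReal_pow hr0.le, ENNReal.ofReal_coe_nnreal, mul_assoc]
          simp_rw [this]
          rw [ENNReal.tsum_mul_left, ENNReal.tsum_geometric, mul_assoc]
      _ ≤ _ := le_refl _



/-- For `0<2α<β≤1` and `h ∈ Höl_β(X,d)`, the kernel
`K_{α,h}(x,y) = (h(x)−h(y))/d(x,y)^{d_f+2α}` defines a bounded operator on `L²(X,μ)`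
with operator norm `≤ C·Höl_β(h)`. -/
theorem statement7
    {X : Type*} [MetricSpace X] [CompactSpace X] [MeasurableSpace X] [BorelSpace X]
    (μ : Measure X) [IsFiniteMeasure μ]
    (df : ℝ) (hdf : 0 < df) (CA : ℝ) (hCA : 1 ≤ CA)
    (hAhlfors : ∀ (x : X) (r : ℝ), 0 ≤ r → r < Metric.diam (Set.univ : Set X) →
      CA⁻¹ * r ^ df ≤ (μ (Metric.closedBall x r)).toReal ∧
        (μ (Metric.closedBall x r)).toReal ≤ CA * r ^ df)
    (α β : ℝ) (hα0 : 0 < α) (hαβ : 2 * α < β) (hβ : β ≤ 1) :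
    ∃ C : ℝ, 0 < C ∧ ∀ (h : X → ℝ) (H : ℝ≥0), HolderWith H β.toNNReal h →
      ∀ f : X → ℝ, MemLp f 2 μ →
        MemLp (fun x => ∫ y, ((h x - h y) / dist x y ^ (df + 2 * α)) * f y ∂μ) 2 μ ∧
        eLpNorm (fun x => ∫ y, ((h x - h y) / dist x y ^ (df + 2 * α)) * f y ∂μ) 2 μ ≤
          ENNReal.ofReal (C * (H : ℝ)) * eLpNorm f 2 μ := by
  obtain ⟨M, hM, hMbound⟩ := kernel_bound μ df hdf CA hCA hAhlfors α β hα0 hαβ hβ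
  have hβ0 : 0 < β := lt_trans (by positivity) hαβ
  refine ⟨M.toReal + 1, by positivity, ?_⟩
  intro h H hH f hf
  set K : X → X → ℝ := fun x y => (h x - h y) / dist x y ^ (df + 2 * α) with hKdef
  have hh : Continuous h := hH.continuous (by simpa using hβ0)
  have hKmeas : Measurable (Function.uncurry K) := by
    have hden : Continuous fun p : X × X => dist p.1 p.2 ^ (df + 2 * α) :=
      (Real.continuous_rpow_const (by positivity)).comp continuous_dist
    exact (((hh.comp continuous_fst).sub (hh.comp continuous_snd)).measurable).div
      hden.measurable
  have hsym : ∀ x y : X, (‖K x y‖₊ : ℝ≥0∞) = (‖K y x‖₊ : ℝ≥0∞) := by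
    intro x y
    have : K x y = -K y x := by
      simp only [hKdef, dist_comm x y]
      ring
    rw [this, nnnorm_neg]
  -- measurable representative of f
  set f' : X → ℝ := hf.1.mk f with hf'def
  have hf'meas : Measurable f' := hf.1.stronglyMeasurable_mk.measurable
  have hff' : f =ᵐ[μ] f' := hf.1.ae_eq_mk
  have hTT : (fun x => ∫ y, K x y * f y ∂μ) = fun x => ∫ y, K x y * f' y ∂μ := by
    funext x
    exact integral_congr_ae (hff'.mono fun y hy => by dsimp only; rw [hy])
  have hTmeas : StronglyMeasurable fun x => ∫ y, K x y * f' y ∂μ := by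
    have : StronglyMeasurable fun p : X × X => K p.1 p.2 * f' p.2 :=
      (hKmeas.mul (hf'meas.comp measurable_snd)).stronglyMeasurable
    exact this.integral_prod_right'
  have hbound : ∀ x : X, ∫⁻ y, (‖K x y‖₊ : ℝ≥0∞) ∂μ ≤ (H : ℝ≥0∞) * M :=
    fun x => hMbound h H hH x
  have schur := schur_aux μ K hKmeas hsym ((H : ℝ≥0∞) * M)
    (ENNReal.mul_ne_top ENNReal.coe_ne_top hM) hbound f' hf'meas
  -- translate to eLpNorm
  have h2 : ((2:ℝ≥0∞)).toReal = (2:ℝ) := by simp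
  have hsnorm : eLpNorm (fun x => ∫ y, K x y * f' y ∂μ) 2 μ ≤
      ((H : ℝ≥0∞) * M) * eLpNorm f' 2 μ := by
    rw [eLpNorm_eq_lintegral_rpow_enorm_toReal (by norm_num) (by norm_num),
      eLpNorm_eq_lintegral_rpow_enorm_toReal (by norm_num) (by norm_num), h2]
    calc (∫⁻ x, (‖∫ y, K x y * f' y ∂μ‖₊ : ℝ≥0∞) ^ (2:ℝ) ∂μ) ^ (1/(2:ℝ))
        ≤ (((H : ℝ≥0∞) * M) ^ (2:ℝ) * ∫⁻ y, (‖f' y‖₊ : ℝ≥0∞) ^ (2:ℝ) ∂μ) ^ (1/(2:ℝ)) :=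
          ENNReal.rpow_le_rpow schur (by norm_num)
      _ = ((H : ℝ≥0∞) * M) * (∫⁻ y, (‖f' y‖₊ : ℝ≥0∞) ^ (2:ℝ) ∂μ) ^ (1/(2:ℝ)) := by
          rw [ENNReal.mul_rpow_of_nonneg _ _ (by norm_num), ← ENNReal.rpow_mul]
          norm_num
  have hHM : (H : ℝ≥0∞) * M ≤ ENNReal.ofReal ((M.toReal + 1) * (H : ℝ)) := by
    rw [ENNReal.ofReal_mul (by positivity), ENNReal.ofReal_coe_nnreal, mul_comm]
    apply mul_le_mul_left
    calc M = ENNReal.ofReal M.toReal := (ENNReal.ofReal_toReal hM).symm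
      _ ≤ ENNReal.ofReal (M.toReal + 1) := ENNReal.ofReal_le_ofReal (by linarith)
  have hfinal : eLpNorm (fun x => ∫ y, K x y * f y ∂μ) 2 μ ≤
      ENNReal.ofReal ((M.toReal + 1) * (H : ℝ)) * eLpNorm f 2 μ := by
    rw [hTT, eLpNorm_congr_ae hff']
    exact le_trans hsnorm (mul_le_mul_left hHM _)
  refine ⟨⟨?_, ?_⟩, hfinal⟩
  · rw [hTT]; exact hTmeas.aestronglyMeasurable
  · refine lt_of_le_of_lt hfinal ?_
    exact ENNReal.mul_lt_top ENNReal.ofReal_lt_top hf.2
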